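/- Let q ∈ (0,1) and ν > -1 with (1-q)(1-q^ν) > √q. Then for every z in the open unit disk U, the normalized Jackson third (Hahn–Exton) q-Bessel function satisfies |h_ν^{(3)}(z;q)| ≤ (1-q)(1-q^ν) / ((1-q)(1-q^ν) - √q). -/

import Mathlib

open Complex

/-- q-Pochhammer symbol (a;q)_n = ∏_{k=1}^n (1 - a q^{k-1}). -/
noncomputable def qPoch (a q : ℝ) (n : ℕ) : ℝ :=
  ∏ k ∈ Finset.range n, (1 - a * q ^ k)

/-- Coefficients of the normalized Jackson third (Hahn-Exton) q-Bessel function. -/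
noncomputable def T (q ν : ℝ) (n : ℕ) : ℝ :=
  (-1) ^ n * q ^ (((n : ℝ) * ((n : ℝ) + 1)) / 2) /
    (qPoch q q n * qPoch (q ^ (ν + 1)) q n)

/-- Normalized Jackson third (Hahn-Exton) q-Bessel function h_ν^{(3)}(z;q). -/
noncomputable def h3 (q ν : ℝ) (z : ℂ) : ℂ :=
  ∑' n : ℕ, (T q ν n : ℂ) * z ^ (n + 1)

/-- Derivative of the normalized Jackson third q-Bessel function. -/
noncomputable def h3' (q ν : ℝ) (z : ℂ) : ℂ :=
  ∑' n : ℕ, ((n : ℂ) + 1) * (T q ν n : ℂ) * z ^ n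

/-- m-th partial sum of h_ν^{(3)}(z;q). -/
noncomputable def h3p (q ν : ℝ) (m : ℕ) (z : ℂ) : ℂ :=
  z + ∑ n ∈ Finset.Icc 1 m, (T q ν n : ℂ) * z ^ (n + 1)

/-- Derivative of the m-th partial sum of h_ν^{(3)}(z;q). -/
noncomputable def h3p' (q ν : ℝ) (m : ℕ) (z : ℂ) : ℂ :=
  1 + ∑ n ∈ Finset.Icc 1 m, ((n : ℂ) + 1) * (T q ν n : ℂ) * z ^ n

set_option maxHeartbeats 1000000
lemma qPoch_q_lb {q : ℝ} (hq0 : 0 < q) (hq1 : q < 1) (n : ℕ) :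
    (1 - q) ^ n ≤ qPoch q q n := by
  unfold qPoch
  have e : (1 - q) ^ n = ∏ _k ∈ Finset.range n, (1 - q) := by
    rw [Finset.prod_const, Finset.card_range]
  rw [e]
  apply Finset.prod_le_prod
  · intro k _; linarith
  · intro k _
    have h1 : q ^ k ≤ 1 := pow_le_one₀ hq0.le hq1.le
    nlinarith

lemma qPoch_nu_lb {q ν : ℝ} (hq0 : 0 < q) (hq1 : q < 1) (hν : -1 < ν)
    (hB : q ^ ν ≤ 1) (n : ℕ) :
    (1 - q ^ ν) ^ n ≤ qPoch (q ^ (ν + 1)) q n := by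
  unfold qPoch
  have e : (1 - q ^ ν) ^ n = ∏ _k ∈ Finset.range n, (1 - q ^ ν) := by
    rw [Finset.prod_const, Finset.card_range]
  rw [e]
  apply Finset.prod_le_prod
  · intro k _; linarith
  · intro k _
    have h0 : (0:ℝ) < q ^ (ν + 1) := Real.rpow_pos_of_pos hq0 _
    have h1 : (q:ℝ) ^ k ≤ 1 := pow_le_one₀ hq0.le hq1.le
    have h2 : q ^ (ν + 1) ≤ q ^ ν :=
      Real.rpow_le_rpow_of_exponent_ge hq0 hq1.le (by linarith)
    nlinarith

theorem stmt2 (q ν : ℝ) (hq : q ∈ Set.Ioo (0 : ℝ) 1) (hν : -1 < ν)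
    (hc : (1 - q) * (1 - q ^ ν) > Real.sqrt q) :
    ∀ z : ℂ, ‖z‖ < 1 →
      ‖h3 q ν z‖ ≤ (1 - q) * (1 - q ^ ν) / ((1 - q) * (1 - q ^ ν) - Real.sqrt q) := by
  obtain ⟨hq0, hq1⟩ := hq
  have hs : (0:ℝ) < Real.sqrt q := Real.sqrt_pos.mpr hq0
  have hA : (0:ℝ) < 1 - q := by linarith
  have hB : (0:ℝ) < 1 - q ^ ν := by nlinarith
  set P : ℝ := (1 - q) * (1 - q ^ ν) with hPdef
  have hPpos : 0 < P := mul_pos hA hB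
  set r : ℝ := Real.sqrt q / P with hrdef
  have hr0 : 0 < r := div_pos hs hPpos
  have hr1 : r < 1 := (div_lt_one hPpos).mpr hc
  -- coefficient bound
  have hT : ∀ n : ℕ, |T q ν n| ≤ r ^ n := by
    intro n
    have hP1 := qPoch_q_lb hq0 hq1 n
    have hP2 := qPoch_nu_lb hq0 hq1 hν (by linarith) n
    have hP1pos : 0 < qPoch q q n := lt_of_lt_of_le (pow_pos hA n) hP1
    have hP2pos : 0 < qPoch (q ^ (ν + 1)) q n := lt_of_lt_of_le (pow_pos hB n) hP2
    have hE : q ^ (((n : ℝ) * ((n : ℝ) + 1)) / 2) ≤ (Real.sqrt q) ^ n := by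
      have h1 : (Real.sqrt q) ^ n = q ^ ((n : ℝ) / 2) := by
        rw [Real.sqrt_eq_rpow, ← Real.rpow_natCast (q ^ ((1:ℝ)/2)) n,
          ← Real.rpow_mul hq0.le]
        ring_nf
      rw [h1]
      apply Real.rpow_le_rpow_of_exponent_ge hq0 hq1.le
      have : (0:ℝ) ≤ (n:ℝ) := Nat.cast_nonneg n
      nlinarith
    have habs : |T q ν n| =
        q ^ (((n : ℝ) * ((n : ℝ) + 1)) / 2) / (qPoch q q n * qPoch (q ^ (ν + 1)) q n) := by
      unfold T
      rw [abs_div, abs_mul, _root_.abs_pow, _root_.abs_neg, _root_.abs_one, one_pow, one_mul,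
        _root_.abs_of_nonneg (Real.rpow_nonneg hq0.le _),
        _root_.abs_of_pos (mul_pos hP1pos hP2pos)]
    rw [habs, hrdef, div_pow]
    apply div_le_div₀ (pow_nonneg hs.le n) hE (pow_pos hPpos n)
    calc P ^ n = (1 - q) ^ n * (1 - q ^ ν) ^ n := mul_pow _ _ _
      _ ≤ qPoch q q n * qPoch (q ^ (ν + 1)) q n :=
        mul_le_mul hP1 hP2 (pow_nonneg hB.le n) hP1pos.le
  intro z hz
  have hterm : ∀ n : ℕ, ‖(T q ν n : ℂ) * z ^ (n + 1)‖ ≤ r ^ n := by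
    intro n
    rw [norm_mul, norm_pow, Complex.norm_real, Real.norm_eq_abs]
    calc |T q ν n| * ‖z‖ ^ (n + 1)
        ≤ r ^ n * 1 :=
          mul_le_mul (hT n) (pow_le_one₀ (norm_nonneg z) hz.le)
            (pow_nonneg (norm_nonneg z) _) (pow_nonneg hr0.le n)
      _ = r ^ n := mul_one _
  have hgeo : Summable (fun n : ℕ => r ^ n) := summable_geometric_of_lt_one hr0.le hr1
  have hsum : Summable (fun n : ℕ => ‖(T q ν n : ℂ) * z ^ (n + 1)‖) :=
    Summable.of_nonneg_of_le (fun n => norm_nonneg _) hterm hgeo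
  have h1 : ‖h3 q ν z‖ ≤ ∑' n : ℕ, ‖(T q ν n : ℂ) * z ^ (n + 1)‖ := by
    exact norm_tsum_le_tsum_norm hsum
  have h2 : (∑' n : ℕ, ‖(T q ν n : ℂ) * z ^ (n + 1)‖) ≤ ∑' n : ℕ, r ^ n :=
    Summable.tsum_le_tsum hterm hsum hgeo
  have h3s : (∑' n : ℕ, r ^ n) = (1 - r)⁻¹ := tsum_geometric_of_lt_one hr0.le hr1
  have h4 : (1 - r)⁻¹ = P / (P - Real.sqrt q) := by
    have : 1 - r = (P - Real.sqrt q) / P := by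
      rw [hrdef]; field_simp
    rw [this, inv_div]
  calc ‖h3 q ν z‖ ≤ ∑' n : ℕ, r ^ n := le_trans h1 h2
    _ = P / (P - Real.sqrt q) := by rw [h3s, h4]
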